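/- Let L be a Lie superalgebra over R, let P : L → L be an R-linear parity-preserving projector whose image V = P(L) is an abelian subalgebra and which satisfies the distributive law, and let Δ ∈ L be an odd element. Then for every even element ξ ∈ V and every n ≥ 0: Σ_{l=0}^{n} (n choose l) · { {ξ,…,ξ (n−l copies)}_Δ , ξ,…,ξ (l copies) }_Δ = P((−ad ξ)ⁿ Δ²), where ad ξ = [ξ, ·] and the right-hand side equals the n-th derived bracket {ξ,…,ξ}_{Δ²}. -/

import Mathlib

/-!
Higher derived brackets (Th. Voronov, "Higher derived brackets and homotopy algebras").

STATEMENT 0: For a Lie superalgebra `L` over `R` with a parity-preserving projector `P`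
onto an abelian subalgebra satisfying the distributive law, and an odd element `Δ`,
the `n`-th Jacobiator of the higher derived brackets of `Δ` equals the
`n`-th derived bracket of `Δ² = (1/2)[Δ,Δ]`.
-/

open Finset

/-- The sign `(-1)^e` for a parity `e : ZMod 2`, as an element of `R`. -/
def sgn (R : Type*) [CommRing R] (e : ZMod 2) : R := if e = 0 then 1 else -1

variable {R : Type*} [CommRing R] {L : Type*} [AddCommGroup L] [Module R L]

/-- Iterated bracket `[...[[z,a₁],a₂],...,aₙ]`. -/
def iterBr (br : L →ₗ[R] L →ₗ[R] L) : L → List L → L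
  | z, [] => z
  | z, a :: rest => iterBr br (br z a) rest

/-- The `n`-th higher derived bracket `{a₁,...,aₙ}_Δ := P [...[[Δ,a₁],a₂],...,aₙ]`. -/
def dbr (br : L →ₗ[R] L →ₗ[R] L) (P : L →ₗ[R] L) (Δ : L) (n : ℕ) (a : Fin n → L) : L :=
  P (iterBr br Δ (List.ofFn a))

/-- The exponent of the Koszul sign of the `(k,l)`-shuffle determined by the
`k`-element subset `S ⊆ {0,...,n-1}` on homogeneous arguments of parities `p i`:
a factor `(-1)^{p i · p j}` for each pair `i < j` with `i ∉ S`, `j ∈ S`. -/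
def koszulExp {n : ℕ} (p : Fin n → ZMod 2) (S : Finset (Fin n)) : ZMod 2 :=
  ∑ j ∈ S, ∑ i ∈ Sᶜ.filter (fun i => i < j), p i * p j

/-- The `n`-th Jacobiator
`Jⁿ(a₁,…,aₙ) = Σ_{k+l=n} Σ_{(k,l)-shuffles σ} (−1)^α {{a_{σ(1)},…,a_{σ(k)}}, a_{σ(k+1)},…,a_{σ(n)}}`
of a family of `n`-ary operations, the sum over `(k,l)`-shuffles being realized as a sum
over the `k`-element subsets `S` of indices (listed in increasing order inside each group),
with `(−1)^α` the Koszul sign of the shuffle on arguments of parities `p i`. -/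
def Jac (R : Type*) [CommRing R] {M : Type*} [AddCommGroup M] [Module R M]
    (br : ∀ n : ℕ, (Fin n → M) → M) (n : ℕ) (p : Fin n → ZMod 2) (a : Fin n → M) : M :=
  ∑ S : Finset (Fin n),
    sgn R (koszulExp p S) •
      br (Sᶜ.card + 1)
        (Fin.cons (br S.card (fun i => a ((S.orderIsoOfFin rfl i : Fin n))))
          (fun i => a ((Sᶜ.orderIsoOfFin rfl i : Fin n))))

/-- For a Lie superalgebra `L` over `R` (with `2` invertible), a
parity-preserving projector `P` onto an abelian subalgebra satisfying the distributive law,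
an odd `Δ ∈ L`, and an even `ξ ∈ V = P(L)`:
`Σ_{l=0}^{n} (n choose l) • { {ξ,…,ξ (n−l copies)}_Δ , ξ,…,ξ (l copies) }_Δ = P((−ad ξ)ⁿ Δ²)`,
and the right-hand side equals the `n`-th derived bracket `{ξ,…,ξ}_{Δ²}`,
where `Δ² = (1/2)[Δ,Δ]`. -/
theorem jacobiator_on_even_element_eq_derived_bracket_of_square
    (R : Type*) [CommRing R] [Invertible (2 : R)]
    (L : Type*) [AddCommGroup L] [Module R L]
    (grading : ZMod 2 → Submodule R L)
    (hdirect : DirectSum.IsInternal grading)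
    (br : L →ₗ[R] L →ₗ[R] L)
    (hgrade : ∀ (i j : ZMod 2) (a b : L), a ∈ grading i → b ∈ grading j →
      br a b ∈ grading (i + j))
    (hskew : ∀ (i j : ZMod 2) (a b : L), a ∈ grading i → b ∈ grading j →
      br a b = (-(sgn R (i * j))) • br b a)
    (hjacobi : ∀ (i j : ZMod 2) (a b c : L), a ∈ grading i → b ∈ grading j →
      br a (br b c) = br (br a b) c + (sgn R (i * j)) • br b (br a c))
    (P : L →ₗ[R] L) (hproj : ∀ x, P (P x) = P x)
    (hPparity : ∀ (i : ZMod 2) (x : L), x ∈ grading i → P x ∈ grading i)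
    (habelian : ∀ x y : L, br (P x) (P y) = 0)
    (hdistrib : ∀ x y : L, P (br x y) = P (br (P x) y) + P (br x (P y)))
    (Δ : L) (hΔ : Δ ∈ grading 1)
    (ξ : L) (hξV : ξ ∈ LinearMap.range P) (hξeven : ξ ∈ grading 0)
    (n : ℕ) :
    (∑ l ∈ Finset.range (n + 1), (n.choose l) •
        dbr br P Δ (l + 1)
          (Fin.cons (dbr br P Δ (n - l) (fun _ => ξ)) (fun _ => ξ))) =
      P (((-(br ξ)) ^ n) ((⅟(2 : R)) • br Δ Δ)) ∧
    P (((-(br ξ)) ^ n) ((⅟(2 : R)) • br Δ Δ)) =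
      dbr br P ((⅟(2 : R)) • br Δ Δ) n (fun _ => ξ) := by
  obtain ⟨u, hu⟩ := hξV
  set A : Module.End R L := -(br ξ) with hA
  have hAx : ∀ x : L, A x = -(br ξ x) := fun x => rfl
  have htop : (⨆ i, grading i) = ⊤ := hdirect.submodule_iSup_eq_top
  have hskew0 : ∀ x : L, br x ξ = A x := by
    intro x
    have hx : x ∈ (⨆ i, grading i) := by rw [htop]; trivial
    refine Submodule.iSup_induction (motive := fun x => br x ξ = A x) grading hx ?_ ?_ ?_
    · intro i y hy
      have h := hskew i 0 y ξ hy hξeven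
      simpa [sgn, hAx] using h
    · simp
    · intro x y hx hy
      simp only [map_add, LinearMap.add_apply, hx, hy, hAx]
      abel
  have hAP : ∀ x : L, A (P x) = 0 := by
    intro x
    rw [← hskew0, ← hu]
    exact habelian x u
  set f : ℕ → L := fun k => (A ^ k) Δ with hf
  have hf0 : f 0 = Δ := by simp [hf]
  have hfs : ∀ k, f (k + 1) = A (f k) := by
    intro k
    simp [hf, pow_succ', Module.End.mul_apply]
  have hf1 : ∀ k, f k ∈ grading 1 := by
    intro k
    induction k with
    | zero => rw [hf0]; exact hΔ
    | succ k ih =>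
        rw [hfs k, hAx]
        exact Submodule.neg_mem _ (by simpa using hgrade 0 1 ξ (f k) hξeven ih)
  have hder : ∀ x y : L, x ∈ grading 1 → A (br x y) = br (A x) y + br x (A y) := by
    intro x y hx
    have h := hjacobi 0 1 ξ x y hξeven hx
    have hs : sgn R ((0 : ZMod 2) * 1) = 1 := by simp [sgn]
    rw [hs, one_smul] at h
    rw [hAx, h, hAx, hAx]
    simp only [map_neg, LinearMap.neg_apply]
    abel
  have hsym : ∀ x y : L, x ∈ grading 1 → y ∈ grading 1 → br x y = br y x := by
    intro x y hx hy
    have h := hskew 1 1 x y hx hy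
    have hs : sgn R ((1 : ZMod 2) * 1) = -1 := by
      simp only [one_mul, sgn]
      norm_num
    rw [hs] at h
    simpa using h
  have hLeib : ∀ m : ℕ, (A ^ m) (br Δ Δ) =
      ∑ l ∈ Finset.range (m + 1), (m.choose l) • br (f (m - l)) (f l) := by
    intro m
    induction m with
    | zero => simp [hf0]
    | succ m ih =>
        have step : (A ^ (m + 1)) (br Δ Δ) =
            ∑ l ∈ Finset.range (m + 1), (m.choose l) •
              (br (f (m + 1 - l)) (f l) + br (f (m - l)) (f (l + 1))) := by
          rw [pow_succ', Module.End.mul_apply, ih, map_sum]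
          refine Finset.sum_congr rfl fun l hl => ?_
          have hl' : l ≤ m := Nat.lt_succ_iff.mp (Finset.mem_range.mp hl)
          rw [map_nsmul]
          congr 1
          rw [hder _ _ (hf1 _), ← hfs, ← hfs]
          have e : m + 1 - l = m - l + 1 := by omega
          rw [e]
        rw [step]
        have key : ∑ l ∈ Finset.range (m + 1 + 1), ((m + 1).choose l) • br (f (m + 1 - l)) (f l)
            = ∑ l ∈ Finset.range (m + 1), (m.choose l) •
              (br (f (m + 1 - l)) (f l) + br (f (m - l)) (f (l + 1))) := by
          have h1 : ∀ l : ℕ, br (f (m - l)) (f (l + 1)) = br (f (m + 1 - (l + 1))) (f (l + 1)) := by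
            intro l; rw [Nat.succ_sub_succ]
          simp only [smul_add, Finset.sum_add_distrib, h1]
          rw [Finset.sum_range_succ' (fun l => ((m + 1).choose l) • br (f (m + 1 - l)) (f l)) (m + 1)]
          simp only [Nat.choose_succ_succ, add_smul, Finset.sum_add_distrib,
            Nat.choose_zero_right, one_smul]
          have h2 : ∑ l ∈ Finset.range (m + 1), (m.choose (l + 1)) • br (f (m + 1 - (l + 1))) (f (l + 1))
              + br (f (m + 1 - 0)) (f 0)
              = ∑ l ∈ Finset.range (m + 1), (m.choose l) • br (f (m + 1 - l)) (f l) := by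
            have h3 := Finset.sum_range_succ' (fun l => (m.choose l) • br (f (m + 1 - l)) (f l)) (m + 1)
            rw [Finset.sum_range_succ (fun l => (m.choose l) • br (f (m + 1 - l)) (f l)) (m + 1)] at h3
            simp only [Nat.choose_succ_self, zero_smul, add_zero, Nat.choose_zero_right, one_smul] at h3
            exact h3.symm
          rw [add_assoc, h2]
          abel
        rw [key]
  have hIter : ∀ (k : ℕ) (x : L), iterBr br x (List.replicate k ξ) = (A ^ k) x := by
    intro k
    induction k with
    | zero => intro x; simp [iterBr]
    | succ k ih =>
        intro x
        rw [List.replicate_succ]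
        show iterBr br (br x ξ) (List.replicate k ξ) = _
        rw [ih, hskew0, ← Module.End.mul_apply, ← pow_succ]
  have hdbrc : ∀ k : ℕ, dbr br P Δ k (fun _ => ξ) = P (f k) := by
    intro k
    unfold dbr
    rw [List.ofFn_const, hIter]
  have hmove : ∀ (c : L) (l : ℕ), (A ^ l) (br Δ (P c)) = br (f l) (P c) := by
    intro c l
    induction l with
    | zero => simp [hf0]
    | succ l ih =>
        rw [pow_succ', Module.End.mul_apply, ih, hder _ _ (hf1 l), hAP, map_zero, add_zero, ← hfs]
  have hLHSterm : ∀ l, dbr br P Δ (l + 1)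
        (Fin.cons (dbr br P Δ (n - l) (fun _ => ξ)) (fun _ => ξ))
      = P (br (f l) (P (f (n - l)))) := by
    intro l
    rw [hdbrc]
    unfold dbr
    have hlist : List.ofFn (Fin.cons (P (f (n - l))) (fun _ : Fin l => ξ))
        = P (f (n - l)) :: List.replicate l ξ := by
      rw [List.ofFn_succ]
      simp [Fin.cons_zero, Fin.cons_succ, List.ofFn_const]
    rw [hlist]
    show P (iterBr br (br Δ (P (f (n - l)))) (List.replicate l ξ)) = _
    rw [hIter, hmove]
  have hT : P (((-(br ξ)) ^ n) ((⅟(2 : R)) • br Δ Δ))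
      = ∑ l ∈ Finset.range (n + 1), (n.choose l) • P (br (f l) (P (f (n - l)))) := by
    rw [← hA, map_smul, map_smul, hLeib, map_sum]
    have hsplit : ∀ l ∈ Finset.range (n + 1),
        P ((n.choose l) • br (f (n - l)) (f l))
          = (n.choose l) • P (br (f l) (P (f (n - l))))
            + (n.choose l) • P (br (f (n - l)) (P (f l))) := by
      intro l hl
      rw [map_nsmul, hdistrib, hsym (P (f (n - l))) (f l) (hPparity 1 _ (hf1 _)) (hf1 _), smul_add]
    rw [Finset.sum_congr rfl hsplit, Finset.sum_add_distrib]
    have hrefl : ∑ l ∈ Finset.range (n + 1), (n.choose l) • P (br (f (n - l)) (P (f l)))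
        = ∑ l ∈ Finset.range (n + 1), (n.choose l) • P (br (f l) (P (f (n - l)))) := by
      rw [← Finset.sum_range_reflect (fun l => (n.choose l) • P (br (f (n - l)) (P (f l)))) (n + 1)]
      refine Finset.sum_congr rfl fun l hl => ?_
      have hl' : l ≤ n := Nat.lt_succ_iff.mp (Finset.mem_range.mp hl)
      have e1 : n + 1 - 1 - l = n - l := by omega
      have e2 : n - (n - l) = l := by omega
      rw [e1, e2, Nat.choose_symm hl']
    rw [hrefl, ← two_smul R, smul_smul, invOf_mul_self, one_smul]
  constructor
  · rw [hT]
    exact Finset.sum_congr rfl fun l _ => by rw [hLHSterm l]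
  · unfold dbr
    rw [List.ofFn_const, hIter, hA]
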